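/- Let K ⊆ ℝⁿ be closed and N ⊆ ℝⁿ a set of points each having a unique nearest point on K; let π : N → K send each point to its nearest point. Then π is continuous on the interior of N. -/

import Mathlib

open Metric Filter Topology

theorem stmt15 (n : ℕ) (K : Set (EuclideanSpace ℝ (Fin n))) (hK : IsClosed K)
    (hKne : K.Nonempty)
    (N : Set (EuclideanSpace ℝ (Fin n)))
    (π : EuclideanSpace ℝ (Fin n) → EuclideanSpace ℝ (Fin n))
    (hπ : ∀ x ∈ N, π x ∈ K ∧ dist x (π x) = infDist x K)
    (huniq : ∀ x ∈ N, ∀ p ∈ K, dist x p = infDist x K → p = π x) :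
    ContinuousOn π (interior N) := by
  have key : ∀ x ∈ interior N, ContinuousAt π x := by
    intro x₀ hx₀
    have hx₀N : x₀ ∈ N := interior_subset hx₀
    have hN : N ∈ 𝓝 x₀ := mem_interior_iff_mem_nhds.mp hx₀
    rw [ContinuousAt, tendsto_iff_seq_tendsto]
    intro u hu
    apply tendsto_of_subseq_tendsto
    intro ns hns
    set v : ℕ → EuclideanSpace ℝ (Fin n) := u ∘ ns with hv
    have hvx : Tendsto v atTop (𝓝 x₀) := hu.comp hns
    have h1 : ∀ᶠ m in atTop, v m ∈ N ∧ dist (v m) x₀ ≤ 1 := by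
      filter_upwards [hvx hN, hvx (closedBall_mem_nhds x₀ one_pos)] with m hm hm'
      exact ⟨hm, mem_closedBall.mp hm'⟩
    obtain ⟨n₀, hn₀⟩ := eventually_atTop.mp h1
    set w : ℕ → EuclideanSpace ℝ (Fin n) := fun m => v (m + n₀) with hw
    have hwN : ∀ m, w m ∈ N := fun m => (hn₀ (m + n₀) (Nat.le_add_left _ _)).1
    have hwd : ∀ m, dist (w m) x₀ ≤ 1 := fun m => (hn₀ (m + n₀) (Nat.le_add_left _ _)).2
    have hwx : Tendsto w atTop (𝓝 x₀) :=
      hvx.comp (tendsto_atTop_atTop.mpr fun b => ⟨b, fun a ha => le_trans ha (Nat.le_add_right _ _)⟩)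
    set R : ℝ := infDist x₀ K + 2 with hR
    have hC : IsCompact (closedBall x₀ R ∩ K) := (isCompact_closedBall x₀ R).inter_right hK
    have hmem : ∀ m, π (w m) ∈ closedBall x₀ R ∩ K := by
      intro m
      refine ⟨mem_closedBall.mpr ?_, (hπ _ (hwN m)).1⟩
      have h2 : dist (w m) (π (w m)) = infDist (w m) K := (hπ _ (hwN m)).2
      have h3 : infDist (w m) K ≤ infDist x₀ K + dist (w m) x₀ := infDist_le_infDist_add_dist
      calc dist (π (w m)) x₀ ≤ dist (π (w m)) (w m) + dist (w m) x₀ := dist_triangle _ _ _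
        _ = dist (w m) (π (w m)) + dist (w m) x₀ := by rw [dist_comm]
        _ ≤ (infDist x₀ K + dist (w m) x₀) + dist (w m) x₀ := by
            rw [h2]; exact add_le_add_left h3 _
        _ ≤ (infDist x₀ K + 1) + 1 := add_le_add (add_le_add_right (hwd m) _) (hwd m)
        _ = R := by ring
    obtain ⟨a, haC, φ, hφ, hconv⟩ := hC.tendsto_subseq hmem
    have hwφ : Tendsto (fun k => w (φ k)) atTop (𝓝 x₀) := hwx.comp hφ.tendsto_atTop
    have hd1 : Tendsto (fun k => dist (w (φ k)) (π (w (φ k)))) atTop (𝓝 (dist x₀ a)) :=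
      (hwφ.dist hconv)
    have hd2 : Tendsto (fun k => dist (w (φ k)) (π (w (φ k)))) atTop (𝓝 (infDist x₀ K)) := by
      have : (fun k => dist (w (φ k)) (π (w (φ k)))) = fun k => infDist (w (φ k)) K := by
        funext k; exact (hπ _ (hwN (φ k))).2
      rw [this]
      exact ((continuous_infDist_pt K).tendsto x₀).comp hwφ
    have hda : dist x₀ a = infDist x₀ K := tendsto_nhds_unique hd1 hd2
    have ha : a = π x₀ := huniq x₀ hx₀N a haC.2 hda
    refine ⟨fun k => φ k + n₀, ?_⟩
    have : (fun k => (π ∘ u) (ns (φ k + n₀))) = fun k => π (w (φ k)) := rfl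
    rw [this, ← ha]
    exact hconv
  exact fun x hx => (key x hx).continuousWithinAt
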